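/- Let Λ > 0, a₀ > 0 and a₁ < √(2Λ/(3a₀)). Then there exist T ∈ (0,∞) and a twice continuously differentiable function a : [0,T) → (0,∞) with a(0) = a₀, a'(0) = a₁, a(t)²a''(t) = −Λ/3 for all t ∈ [0,T), such that lim_{t→T⁻} a(t) = 0 and lim_{t→T⁻} a(t)·(T − t)^{−2/3} = (3Λ/2)^{1/3}. In particular the solution collapses to zero in finite time, with a(t) comparable to a constant multiple of (T − t)^{2/3} as t → T⁻. -/

import Mathlib

open Real Set Filter Topology

lemma one_sub_cos_eq (x : ℝ) : 1 - Real.cos x = 2 * Real.sin (x/2) ^ 2 := by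
  have h2 : Real.cos (2 * (x/2)) = 2 * Real.cos (x/2) ^ 2 - 1 := Real.cos_two_mul _
  have h3 : Real.sin (x/2) ^ 2 + Real.cos (x/2) ^ 2 = 1 := Real.sin_sq_add_cos_sq _
  have : (2:ℝ) * (x/2) = x := by ring
  rw [this] at h2
  nlinarith [Real.sin_sq_add_cos_sq (x/2)]

lemma tendsto_sin_div : Tendsto (fun x => Real.sin x / x) (𝓝[>] (0:ℝ)) (𝓝 1) := by
  have h := Real.hasDerivAt_sin 0
  rw [hasDerivAt_iff_tendsto_slope] at h
  have h2 : Tendsto (slope Real.sin 0) (𝓝[>] (0:ℝ)) (𝓝 (Real.cos 0)) :=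
    h.mono_left (nhdsWithin_mono _ (fun x hx => ne_of_gt hx))
  rw [Real.cos_zero] at h2
  refine h2.congr fun x => ?_
  simp [slope_fun_def, div_eq_inv_mul]

lemma tendsto_sinh_div : Tendsto (fun x => Real.sinh x / x) (𝓝[>] (0:ℝ)) (𝓝 1) := by
  have h := Real.hasDerivAt_sinh 0
  rw [hasDerivAt_iff_tendsto_slope] at h
  have h2 : Tendsto (slope Real.sinh 0) (𝓝[>] (0:ℝ)) (𝓝 (Real.cosh 0)) :=
    h.mono_left (nhdsWithin_mono _ (fun x hx => ne_of_gt hx))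
  rw [Real.cosh_zero] at h2
  refine h2.congr fun x => ?_
  simp [slope_fun_def, div_eq_inv_mul]

lemma tendsto_one_sub_cos : Tendsto (fun x => (1 - Real.cos x) / x^2) (𝓝[>] (0:ℝ)) (𝓝 (1/2)) := by
  have key : Tendsto (fun x => Real.sin x / (2*x)) (𝓝[>] (0:ℝ)) (𝓝 (1/2)) := by
    have := tendsto_sin_div.div_const 2
    refine this.congr' ?_
    filter_upwards [self_mem_nhdsWithin] with x hx
    rw [mem_Ioi] at hx
    rw [div_div, mul_comm]
  refine HasDerivAt.lhopital_zero_right_on_Ioo (f := fun x => 1 - Real.cos x)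
    (f' := fun x => Real.sin x) (g := fun x => x^2) (g' := fun x => 2*x)
    (a := 0) (b := 1) one_pos ?_ ?_ ?_ ?_ ?_ key
  · intro x hx
    simpa using ((Real.hasDerivAt_cos x).const_sub 1)
  · intro x hx
    simpa [mul_comm] using (hasDerivAt_pow 2 x)
  · intro x hx; have h1 := hx.1; positivity
  · have : Tendsto (fun x => 1 - Real.cos x) (𝓝 (0:ℝ)) (𝓝 0) := by
      simpa using ((Real.continuous_cos.tendsto 0).const_sub 1)
    exact this.mono_left nhdsWithin_le_nhds
  · have : Tendsto (fun x : ℝ => x^2) (𝓝 (0:ℝ)) (𝓝 0) := by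
      simpa using (continuous_pow 2).tendsto (0:ℝ)
    exact this.mono_left nhdsWithin_le_nhds

lemma tendsto_cosh_sub_one : Tendsto (fun x => (Real.cosh x - 1) / x^2) (𝓝[>] (0:ℝ)) (𝓝 (1/2)) := by
  have key : Tendsto (fun x => Real.sinh x / (2*x)) (𝓝[>] (0:ℝ)) (𝓝 (1/2)) := by
    have := tendsto_sinh_div.div_const 2
    refine this.congr' ?_
    filter_upwards [self_mem_nhdsWithin] with x hx
    rw [mem_Ioi] at hx
    rw [div_div, mul_comm]
  refine HasDerivAt.lhopital_zero_right_on_Ioo (f := fun x => Real.cosh x - 1)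
    (f' := fun x => Real.sinh x) (g := fun x => x^2) (g' := fun x => 2*x)
    (a := 0) (b := 1) one_pos ?_ ?_ ?_ ?_ ?_ key
  · intro x hx
    simpa using ((Real.hasDerivAt_cosh x).sub_const 1)
  · intro x hx
    simpa [mul_comm] using (hasDerivAt_pow 2 x)
  · intro x hx; have h1 := hx.1; positivity
  · have : Tendsto (fun x => Real.cosh x - 1) (𝓝 (0:ℝ)) (𝓝 0) := by
      simpa using ((Real.continuous_cosh.tendsto 0).sub_const 1)
    exact this.mono_left nhdsWithin_le_nhds
  · have : Tendsto (fun x : ℝ => x^2) (𝓝 (0:ℝ)) (𝓝 0) := by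
      simpa using (continuous_pow 2).tendsto (0:ℝ)
    exact this.mono_left nhdsWithin_le_nhds

lemma tendsto_sub_sin : Tendsto (fun x => (x - Real.sin x) / x^3) (𝓝[>] (0:ℝ)) (𝓝 (1/6)) := by
  have key : Tendsto (fun x => (1 - Real.cos x) / (3*x^2)) (𝓝[>] (0:ℝ)) (𝓝 (1/6)) := by
    have := tendsto_one_sub_cos.div_const 3
    have e : (1:ℝ)/2/3 = 1/6 := by norm_num
    rw [e] at this
    refine this.congr' ?_
    filter_upwards [self_mem_nhdsWithin] with x hx
    rw [mem_Ioi] at hx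
    rw [div_div, mul_comm]
  refine HasDerivAt.lhopital_zero_right_on_Ioo (f := fun x => x - Real.sin x)
    (f' := fun x => 1 - Real.cos x) (g := fun x => x^3) (g' := fun x => 3*x^2)
    (a := 0) (b := 1) one_pos ?_ ?_ ?_ ?_ ?_ key
  · intro x hx
    exact ((hasDerivAt_id' x).sub (Real.hasDerivAt_sin x))
  · intro x hx
    simpa [mul_comm] using (hasDerivAt_pow 3 x)
  · intro x hx; have h1 := hx.1; positivity
  · have : Tendsto (fun x => x - Real.sin x) (𝓝 (0:ℝ)) (𝓝 0) := by
      have h : Tendsto (fun x => x - Real.sin x) (𝓝 0) (𝓝 (0 - Real.sin 0)) := (continuous_id'.sub Real.continuous_sin).tendsto (0:ℝ); rwa [Real.sin_zero, sub_zero] at h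
    exact this.mono_left nhdsWithin_le_nhds
  · have : Tendsto (fun x : ℝ => x^3) (𝓝 (0:ℝ)) (𝓝 0) := by
      simpa using (continuous_pow 3).tendsto (0:ℝ)
    exact this.mono_left nhdsWithin_le_nhds

lemma tendsto_sinh_sub : Tendsto (fun x => (Real.sinh x - x) / x^3) (𝓝[>] (0:ℝ)) (𝓝 (1/6)) := by
  have key : Tendsto (fun x => (Real.cosh x - 1) / (3*x^2)) (𝓝[>] (0:ℝ)) (𝓝 (1/6)) := by
    have := tendsto_cosh_sub_one.div_const 3
    have e : (1:ℝ)/2/3 = 1/6 := by norm_num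
    rw [e] at this
    refine this.congr' ?_
    filter_upwards [self_mem_nhdsWithin] with x hx
    rw [mem_Ioi] at hx
    rw [div_div, mul_comm]
  refine HasDerivAt.lhopital_zero_right_on_Ioo (f := fun x => Real.sinh x - x)
    (f' := fun x => Real.cosh x - 1) (g := fun x => x^3) (g' := fun x => 3*x^2)
    (a := 0) (b := 1) one_pos ?_ ?_ ?_ ?_ ?_ key
  · intro x hx
    exact ((Real.hasDerivAt_sinh x).sub (hasDerivAt_id' x))
  · intro x hx
    simpa [mul_comm] using (hasDerivAt_pow 3 x)
  · intro x hx; have h1 := hx.1; positivity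
  · have : Tendsto (fun x => Real.sinh x - x) (𝓝 (0:ℝ)) (𝓝 0) := by
      have h : Tendsto (fun x => Real.sinh x - x) (𝓝 0) (𝓝 (Real.sinh 0 - 0)) := (Real.continuous_sinh.sub continuous_id').tendsto (0:ℝ); rwa [Real.sinh_zero, sub_zero] at h
    exact this.mono_left nhdsWithin_le_nhds
  · have : Tendsto (fun x : ℝ => x^3) (𝓝 (0:ℝ)) (𝓝 0) := by
      simpa using (continuous_pow 3).tendsto (0:ℝ)
    exact this.mono_left nhdsWithin_le_nhds

lemma cube_neg_two_thirds {x : ℝ} (hx : 0 < x) : (x ^ (-(2:ℝ)/3))^3 = (x^2)⁻¹ := by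
  rw [← Real.rpow_natCast (x ^ (-(2:ℝ)/3)) 3, ← Real.rpow_mul hx.le]
  norm_num

lemma rpow_third_eq {a b : ℝ} (ha : 0 ≤ a) (h : a ^ 3 = b) : a = b ^ ((1:ℝ)/3) := by
  subst h
  rw [← Real.rpow_natCast a 3, ← Real.rpow_mul ha]
  norm_num

lemma rate_const_eq (Λ p q : ℝ) (hΛ : 0 < Λ) (hp : 0 < p) (hq : 0 < q)
    (hq2 : q^2 = 3*p^3/Λ) :
    p * q ^ (-(2:ℝ)/3) * ((1/2) * (1/6:ℝ) ^ (-(2:ℝ)/3)) = (3*Λ/2) ^ ((1:ℝ)/3) := by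
  apply rpow_third_eq (by positivity)
  have h1 := cube_neg_two_thirds hq
  have h2 := cube_neg_two_thirds (show (0:ℝ) < 1/6 by norm_num)
  have hq2' : q^2 ≠ 0 := by positivity
  rw [hq2] at h1
  calc (p * q ^ (-(2:ℝ)/3) * ((1/2) * (1/6:ℝ) ^ (-(2:ℝ)/3)))^3
      = p^3 * (q ^ (-(2:ℝ)/3))^3 * ((1/2)^3 * ((1/6:ℝ) ^ (-(2:ℝ)/3))^3) := by ring
    _ = p^3 * (3*p^3/Λ)⁻¹ * ((1/2)^3 * ((1/6:ℝ)^2)⁻¹) := by rw [h1, h2]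
    _ = 3*Λ/2 := by field_simp; ring

lemma tendsto_sub_Iio (v : ℝ) : Tendsto (fun s => v - s) (nhdsWithin v (Iio v)) (nhdsWithin 0 (Ioi 0)) := by
  rw [tendsto_nhdsWithin_iff]
  constructor
  · have h : Tendsto (fun s : ℝ => v - s) (nhds v) (nhds (v - v)) :=
      (continuous_const.sub continuous_id).tendsto v
    rw [sub_self] at h
    exact h.mono_left nhdsWithin_le_nhds
  · filter_upwards [self_mem_nhdsWithin] with s hs
    rw [mem_Iio] at hs
    rw [mem_Ioi]
    linarith

lemma rate_limit (f g : ℝ → ℝ) (p q : ℝ) (hp : 0 < p) (hq : 0 < q)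
    (hf : Tendsto (fun r => f r / r^2) (nhdsWithin 0 (Ioi 0)) (nhds (1/2)))
    (hg : Tendsto (fun r => g r / r^3) (nhdsWithin 0 (Ioi 0)) (nhds (1/6)))
    (hgpos : ∀ᶠ r in nhdsWithin 0 (Ioi 0), 0 < g r) :
    Tendsto (fun r => p * f r * (q * g r) ^ (-(2:ℝ)/3)) (nhdsWithin 0 (Ioi 0))
      (nhds (p * q ^ (-(2:ℝ)/3) * ((1/2) * (1/6:ℝ) ^ (-(2:ℝ)/3)))) := by
  have h1 : Tendsto (fun r => (f r / r^2) * ((g r / r^3) ^ (-(2:ℝ)/3))) (nhdsWithin 0 (Ioi 0))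
      (nhds ((1/2) * (1/6:ℝ) ^ (-(2:ℝ)/3))) :=
    hf.mul (hg.rpow_const (Or.inl (by norm_num)))
  have h2 : Tendsto (fun r => (p * q ^ (-(2:ℝ)/3)) * ((f r / r^2) * ((g r / r^3) ^ (-(2:ℝ)/3))))
      (nhdsWithin 0 (Ioi 0)) (nhds ((p * q ^ (-(2:ℝ)/3)) * ((1/2) * (1/6:ℝ) ^ (-(2:ℝ)/3)))) :=
    tendsto_const_nhds.mul h1
  have h3 : p * q ^ (-(2:ℝ)/3) * ((1/2) * (1/6:ℝ) ^ (-(2:ℝ)/3)) =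
      (p * q ^ (-(2:ℝ)/3)) * ((1/2) * (1/6:ℝ) ^ (-(2:ℝ)/3)) := by ring
  rw [h3]
  refine h2.congr' ?_
  filter_upwards [self_mem_nhdsWithin, hgpos] with r hr hgr
  rw [mem_Ioi] at hr
  have hr3 : ((r:ℝ)^3) ^ (-(2:ℝ)/3) = (r^2)⁻¹ := by
    rw [← Real.rpow_natCast r 3, ← Real.rpow_mul hr.le]
    norm_num
  rw [Real.mul_rpow hq.le hgr.le, Real.div_rpow hgr.le (by positivity : (0:ℝ) ≤ r^3), hr3]
  have hr2 : (r:ℝ)^2 ≠ 0 := by positivity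
  field_simp

lemma collapse_framework (Λ a₀ a₁ u v L : ℝ) (hΛ : 0 < Λ)
    (hu : u < 0) (hv : 0 < v)
    (A A' A'' B B' B'' : ℝ → ℝ)
    (hAd : ∀ s ∈ Ioo u v, HasDerivAt A (A' s) s)
    (hA'd : ∀ s ∈ Ioo u v, HasDerivAt A' (A'' s) s)
    (hBd : ∀ s ∈ Ioo u v, HasDerivAt B (B' s) s)
    (hB'd : ∀ s ∈ Ioo u v, HasDerivAt B' (B'' s) s)
    (hB'pos : ∀ s ∈ Ioo u v, 0 < B' s)
    (hApos : ∀ s ∈ Ico 0 v, 0 < A s)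
    (hB0 : B 0 = 0) (hA0 : A 0 = a₀) (hinit : A' 0 = a₁ * B' 0)
    (hode : ∀ s ∈ Ioo u v, (A s)^2 * (A'' s * B' s - A' s * B'' s) = (-Λ/3) * (B' s)^3)
    (hBlim : Tendsto B (nhdsWithin v (Iio v)) (nhds L))
    (hAlim : Tendsto A (nhdsWithin v (Iio v)) (nhds 0))
    (hrate : Tendsto (fun s => A s * (L - B s) ^ (-(2:ℝ)/3)) (nhdsWithin v (Iio v))
      (nhds ((3 * Λ / 2) ^ ((1:ℝ)/3)))) :
    ∃ T : ℝ, 0 < T ∧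
    ∃ a a' a'' : ℝ → ℝ,
      a 0 = a₀ ∧ a' 0 = a₁ ∧
      ContinuousOn a'' (Ico 0 T) ∧
      (∀ t ∈ Ico (0 : ℝ) T,
        0 < a t ∧
        HasDerivWithinAt a (a' t) (Ico 0 T) t ∧
        HasDerivWithinAt a' (a'' t) (Ico 0 T) t ∧
        (a t) ^ 2 * a'' t = -Λ / 3) ∧
      Tendsto a (nhdsWithin T (Iio T)) (nhds 0) ∧
      Tendsto (fun t => a t * (T - t) ^ (-(2 : ℝ) / 3)) (nhdsWithin T (Iio T))
        (nhds ((3 * Λ / 2) ^ ((1 : ℝ) / 3))) := by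
  have h0mem : (0:ℝ) ∈ Ioo u v := ⟨hu, hv⟩
  have hBcont : ContinuousOn B (Ioo u v) :=
    fun s hs => (hBd s hs).continuousAt.continuousWithinAt
  have hBmono : StrictMonoOn B (Ioo u v) := by
    apply strictMonoOn_of_deriv_pos (convex_Ioo u v) hBcont
    intro s hs
    rw [interior_Ioo] at hs
    rw [(hBd s hs).deriv]
    exact hB'pos s hs
  have hlt : ∀ s ∈ Ioo u v, B s < L := by
    intro s hs
    have hs' : (s + v)/2 ∈ Ioo u v := ⟨by linarith [hs.1, hs.2], by linarith [hs.2]⟩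
    have h1 : B s < B ((s + v)/2) := hBmono hs hs' (by linarith [hs.2])
    have h2 : B ((s + v)/2) ≤ L := by
      refine ge_of_tendsto hBlim ?_
      filter_upwards [Ioo_mem_nhdsLT_of_mem (⟨by linarith [hs.2], le_refl v⟩ :
        v ∈ Ioc ((s + v)/2) v)] with x hx
      exact (hBmono hs' ⟨by linarith [hs.1, hx.1], hx.2⟩ hx.1).le
    linarith
  have hLpos : 0 < L := hB0 ▸ hlt 0 h0mem
  have hmmem : u/2 ∈ Ioo u v := ⟨by linarith, by linarith⟩
  have hBm : B (u/2) < 0 := hB0 ▸ hBmono hmmem h0mem (by linarith)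
  set I : Set ℝ := Ioo (B (u/2)) L with hI
  have hIopen : IsOpen I := isOpen_Ioo
  have hexists : ∀ t ∈ I, ∃ s ∈ Ioo (u/2) v, B s = t := by
    intro t ht
    have h1 : ∀ᶠ x in nhdsWithin v (Iio v), t < B x := hBlim.eventually (eventually_gt_nhds ht.2)
    have h2 : Ioo (0:ℝ) v ∈ nhdsWithin v (Iio v) :=
      Ioo_mem_nhdsLT_of_mem ⟨hv, le_refl v⟩
    obtain ⟨x, hx1, hx2⟩ := (h1.and (eventually_of_mem h2 (fun x hx => hx))).exists
    have hcont : ContinuousOn B (Icc (u/2) x) := by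
      apply hBcont.mono
      intro y hy
      exact ⟨by linarith [hy.1], lt_of_le_of_lt hy.2 hx2.2⟩
    have hsub := intermediate_value_Ioo (by linarith [hx2.1] : u/2 ≤ x) hcont
    obtain ⟨s, hs, hBs⟩ := hsub (⟨ht.1, hx1⟩ : t ∈ Ioo (B (u/2)) (B x))
    exact ⟨s, ⟨hs.1, lt_trans hs.2 hx2.2⟩, hBs⟩
  set η : ℝ → ℝ := Function.invFunOn B (Ioo u v) with hηdef
  have hη : ∀ t ∈ I, B (η t) = t ∧ η t ∈ Ioo u v := by
    intro t ht
    obtain ⟨s, hs, hBs⟩ := hexists t ht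
    have hmem : s ∈ Ioo u v := ⟨by linarith [hs.1], hs.2⟩
    exact ⟨Function.invFunOn_eq ⟨s, hmem, hBs⟩, Function.invFunOn_mem ⟨s, hmem, hBs⟩⟩
  have hinj := hBmono.injOn
  have h0I : (0:ℝ) ∈ I := ⟨hBm, hLpos⟩
  have hη0 : η 0 = 0 := hinj (hη 0 h0I).2 h0mem (by rw [(hη 0 h0I).1, hB0])
  have hrefl : ∀ t ∈ I, ∀ s ∈ Ioo u v, B s < t → s < η t := by
    intro t ht s hs hBst
    by_contra hc
    push_neg at hc
    have := hBmono.monotoneOn (hη t ht).2 hs hc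
    rw [(hη t ht).1] at this
    linarith
  have hrefl' : ∀ t ∈ I, ∀ s ∈ Ioo u v, t < B s → η t < s := by
    intro t ht s hs hBst
    by_contra hc
    push_neg at hc
    have := hBmono.monotoneOn hs (hη t ht).2 hc
    rw [(hη t ht).1] at this
    linarith
  have hηcont : ∀ t ∈ I, ContinuousAt η t := by
    intro t ht
    have hηm := (hη t ht).2
    rw [ContinuousAt, (nhds_basis_Ioo_pos (η t)).tendsto_right_iff]
    intro ε hε
    set s₁ : ℝ := max (η t - ε) ((u + η t)/2) with hs₁def
    set s₂ : ℝ := min (η t + ε) ((η t + v)/2) with hs₂def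
    have hs₁lt : s₁ < η t := max_lt (by linarith) (by linarith [hηm.1])
    have hs₁m : s₁ ∈ Ioo u v := ⟨lt_of_lt_of_le (by linarith [hηm.1]) (le_max_right _ _),
      hs₁lt.trans hηm.2⟩
    have hs₂gt : η t < s₂ := lt_min (by linarith) (by linarith [hηm.2])
    have hs₂m : s₂ ∈ Ioo u v := ⟨hηm.1.trans hs₂gt,
      lt_of_le_of_lt (min_le_right _ _) (by linarith [hηm.2])⟩
    have hB₁ : B s₁ < t := (hη t ht).1 ▸ hBmono hs₁m hηm hs₁lt
    have hB₂ : t < B s₂ := (hη t ht).1 ▸ hBmono hηm hs₂m hs₂gt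
    filter_upwards [hIopen.mem_nhds ht, isOpen_Ioo.mem_nhds (⟨hB₁, hB₂⟩ : t ∈ Ioo (B s₁) (B s₂))]
      with y hyI hy2
    constructor
    · exact lt_of_le_of_lt (le_max_left _ _ : η t - ε ≤ s₁) (hrefl y hyI s₁ hs₁m hy2.1)
    · exact lt_of_lt_of_le (hrefl' y hyI s₂ hs₂m hy2.2) (min_le_left _ _)
  have hηd : ∀ t ∈ I, HasDerivAt η (B' (η t))⁻¹ t := by
    intro t ht
    refine HasDerivAt.of_local_left_inverse (hηcont t ht) (hBd (η t) (hη t ht).2)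
      (ne_of_gt (hB'pos _ (hη t ht).2)) ?_
    filter_upwards [hIopen.mem_nhds ht] with y hy using (hη y hy).1
  have hsub : Ico (0:ℝ) L ⊆ I := fun t ht => ⟨lt_of_lt_of_le hBm ht.1, ht.2⟩
  have hη01 : ∀ t ∈ Ico (0:ℝ) L, η t ∈ Ico 0 v := by
    intro t ht
    refine ⟨?_, (hη t (hsub ht)).2.2⟩
    rcases eq_or_lt_of_le ht.1 with h | h
    · rw [← h, hη0]
    · exact le_of_lt (hrefl t (hsub ht) 0 h0mem (by rw [hB0]; exact h))
  have hapos : ∀ t ∈ Ico (0:ℝ) L, 0 < A (η t) := fun t ht => hApos _ (hη01 t ht)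
  have hbpos : ∀ t ∈ Ico (0:ℝ) L, 0 < B' (η t) := fun t ht => hB'pos _ (hη t (hsub ht)).2
  have had : ∀ t ∈ Ico (0:ℝ) L, HasDerivAt (fun t => A (η t)) (A' (η t) * (B' (η t))⁻¹) t :=
    fun t ht => (hAd _ (hη t (hsub ht)).2).comp t (hηd t (hsub ht))
  have hηtend : Tendsto η (nhdsWithin L (Iio L)) (nhdsWithin v (Iio v)) := by
    rw [tendsto_nhdsWithin_iff]
    constructor
    · rw [tendsto_order]
      constructor
      · intro s₀ hs₀
        have hs₂m : (max s₀ 0 + v)/2 ∈ Ioo u v := by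
          constructor
          · have h1 := le_max_right s₀ 0
            linarith
          · have h1 := max_lt hs₀ hv
            linarith
        have hs₂gt : s₀ < (max s₀ 0 + v)/2 := by
          have h1 := le_max_left s₀ 0
          have h2 := max_lt hs₀ hv
          linarith
        have hBL := hlt _ hs₂m
        have hmem : Ioo (max (B ((max s₀ 0 + v)/2)) 0) L ∈ nhdsWithin L (Iio L) :=
          Ioo_mem_nhdsLT_of_mem ⟨max_lt hBL hLpos, le_refl L⟩
        filter_upwards [hmem] with t htm
        have htI : t ∈ I :=
          ⟨lt_of_lt_of_le hBm (le_of_lt (lt_of_le_of_lt (le_max_right _ 0) htm.1)), htm.2⟩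
        exact hs₂gt.trans (hrefl t htI _ hs₂m (lt_of_le_of_lt (le_max_left _ _) htm.1))
      · intro s₀ hs₀
        filter_upwards [Ioo_mem_nhdsLT_of_mem ⟨hLpos, le_refl L⟩] with t htm
        exact lt_trans (hη t ⟨lt_trans hBm htm.1, htm.2⟩).2.2 hs₀
    · filter_upwards [Ioo_mem_nhdsLT_of_mem ⟨hLpos, le_refl L⟩] with t htm
      exact (hη t ⟨lt_trans hBm htm.1, htm.2⟩).2.2
  refine ⟨L, hLpos, fun t => A (η t), fun t => A' (η t) * (B' (η t))⁻¹,
    fun t => (-Λ/3) / (A (η t))^2, ?_, ?_, ?_, ?_, ?_, ?_⟩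
  · show A (η 0) = a₀
    rw [hη0, hA0]
  · show A' (η 0) * (B' (η 0))⁻¹ = a₁
    rw [hη0, hinit]
    exact mul_inv_cancel_right₀ (ne_of_gt (hB'pos 0 h0mem)) a₁
  · -- continuity of a''
    intro t ht
    refine ContinuousAt.continuousWithinAt ?_
    exact continuousAt_const.div ((had t ht).continuousAt.pow 2)
      (pow_ne_zero 2 (ne_of_gt (hapos t ht)))
  · intro t ht
    have htI := hsub ht
    have hηm := (hη t htI).2
    refine ⟨hapos t ht, (had t ht).hasDerivWithinAt, ?_, ?_⟩
    · -- derivative of a'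
      have h1 : HasDerivAt (fun t => A' (η t)) (A'' (η t) * (B' (η t))⁻¹) t :=
        (hA'd _ hηm).comp t (hηd t htI)
      have h2 : HasDerivAt (fun t => B' (η t)) (B'' (η t) * (B' (η t))⁻¹) t :=
        (hB'd _ hηm).comp t (hηd t htI)
      have h3 : HasDerivAt (fun t => (B' (η t))⁻¹)
          (-(B'' (η t) * (B' (η t))⁻¹) / (B' (η t))^2) t :=
        h2.inv (ne_of_gt (hbpos t ht))
      have h4 := h1.mul h3
      have heq : A'' (η t) * (B' (η t))⁻¹ * (B' (η t))⁻¹ +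
          A' (η t) * (-(B'' (η t) * (B' (η t))⁻¹) / (B' (η t))^2) =
          (-Λ/3) / (A (η t))^2 := by
        have hode' := hode (η t) hηm
        have ha := ne_of_gt (hapos t ht)
        have hb := ne_of_gt (hbpos t ht)
        field_simp
        linear_combination 3 * hode'
      rw [heq] at h4
      exact h4.hasDerivWithinAt
    · -- the ODE
      have ha := ne_of_gt (hapos t ht)
      field_simp
  · exact hAlim.comp hηtend
  · refine (hrate.comp hηtend).congr' ?_
    filter_upwards [Ioo_mem_nhdsLT_of_mem ⟨hLpos, le_refl L⟩] with t htm
    have htI : t ∈ I := ⟨lt_trans hBm htm.1, htm.2⟩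
    simp only [Function.comp]
    rw [(hη t htI).1]

lemma one_sub_cos_pos {φ : ℝ} (h1 : 0 < φ) (h2 : φ < 2 * π) : 0 < 1 - Real.cos φ := by
  rw [one_sub_cos_eq]
  have : 0 < Real.sin (φ/2) :=
    Real.sin_pos_of_pos_of_lt_pi (by linarith) (by linarith)
  positivity

lemma elliptic_case (Λ a₀ a₁ : ℝ) (hΛ : 0 < Λ) (ha₀ : 0 < a₀)
    (ha₁ : a₁ < Real.sqrt (2 * Λ / (3 * a₀)))
    (ha₁' : -Real.sqrt (2 * Λ / (3 * a₀)) < a₁) :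
    ∃ T : ℝ, 0 < T ∧
    ∃ a a' a'' : ℝ → ℝ,
      a 0 = a₀ ∧ a' 0 = a₁ ∧
      ContinuousOn a'' (Ico 0 T) ∧
      (∀ t ∈ Ico (0 : ℝ) T,
        0 < a t ∧
        HasDerivWithinAt a (a' t) (Ico 0 T) t ∧
        HasDerivWithinAt a' (a'' t) (Ico 0 T) t ∧
        (a t) ^ 2 * a'' t = -Λ / 3) ∧
      Tendsto a (nhdsWithin T (Iio T)) (nhds 0) ∧
      Tendsto (fun t => a t * (T - t) ^ (-(2 : ℝ) / 3)) (nhdsWithin T (Iio T))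
        (nhds ((3 * Λ / 2) ^ ((1 : ℝ) / 3))) := by
  have hsq : a₁^2 < 2 * Λ / (3 * a₀) := by
    have h0 : (0:ℝ) < 2 * Λ / (3 * a₀) := by positivity
    have hs : Real.sqrt (2 * Λ / (3 * a₀)) ^ 2 = 2 * Λ / (3 * a₀) := Real.sq_sqrt h0.le
    nlinarith [sq_lt_sq' ha₁' ha₁]
  have h3a : (0:ℝ) < 3 * a₀ := by positivity
  have he' : a₁^2 * (3*a₀) < 2*Λ := by
    have h := mul_lt_mul_of_pos_right hsq h3a
    rwa [div_mul_cancel₀ _ (ne_of_gt h3a)] at h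
  obtain ⟨e, hedef⟩ : ∃ e : ℝ, e = Λ/(3*a₀) - a₁^2/2 := ⟨_, rfl⟩
  have he : 0 < e := by
    rw [hedef, sub_pos, div_lt_div_iff₀ two_pos h3a]
    linarith
  obtain ⟨p, hpdef⟩ : ∃ p : ℝ, p = Λ/(6*e) := ⟨_, rfl⟩
  have hp : 0 < p := by rw [hpdef]; positivity
  have hp0 : p ≠ 0 := ne_of_gt hp
  have hpe : 6*p*e = Λ := by rw [hpdef]; field_simp
  have hea : 6*a₀*e = 2*Λ - 3*a₀*a₁^2 := by rw [hedef]; field_simp; ring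
  have h3p : (0:ℝ) < 3*p^3/Λ := div_pos (by positivity) hΛ
  obtain ⟨q, hqdef⟩ : ∃ q : ℝ, q = Real.sqrt (3*p^3/Λ) := ⟨_, rfl⟩
  have hq : 0 < q := by rw [hqdef]; exact Real.sqrt_pos.2 h3p
  have hq2 : q^2 = 3*p^3/Λ := by rw [hqdef]; exact Real.sq_sqrt h3p.le
  obtain ⟨x, hxdef⟩ : ∃ x : ℝ, x = 1 - a₀/p := ⟨_, rfl⟩
  have hx1 : x < 1 := by
    rw [hxdef]
    have : 0 < a₀/p := by positivity
    linarith
  have h6 : 6*e*(2*p - a₀) = 3*a₀*a₁^2 := by linear_combination 2*hpe - hea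
  have ha2p : a₀ ≤ 2*p := by
    by_contra hcon
    push_neg at hcon
    have h7 : 6*e*(2*p - a₀) < 0 := mul_neg_of_pos_of_neg (by positivity) (by linarith)
    nlinarith [sq_nonneg a₁]
  have hxm1 : -1 ≤ x := by
    rw [hxdef]
    have : a₀/p ≤ 2 := by rw [div_le_iff₀ hp]; linarith
    linarith
  obtain ⟨θ, hθdef⟩ : ∃ θ : ℝ, θ = Real.arccos x := ⟨_, rfl⟩
  have hcosθ : Real.cos θ = x := by rw [hθdef]; exact Real.cos_arccos hxm1 hx1.le
  have hsinθ : Real.sin θ = Real.sqrt (1 - x^2) := by rw [hθdef]; exact Real.sin_arccos x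
  have hθpos : 0 < θ := by rw [hθdef]; exact Real.arccos_pos.2 hx1
  have hθle : θ ≤ π := by rw [hθdef]; exact Real.arccos_le_pi x
  obtain ⟨η₀, hη₀def⟩ : ∃ η₀ : ℝ, η₀ = if 0 ≤ a₁ then θ else 2*π - θ := ⟨_, rfl⟩
  have hπ := Real.pi_pos
  have hη₀pos : 0 < η₀ := by
    rw [hη₀def]; split
    · exact hθpos
    · linarith
  have hη₀lt : η₀ < 2*π := by
    rw [hη₀def]; split
    · linarith
    · linarith
  have hcos0 : Real.cos η₀ = x := by
    rw [hη₀def]; split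
    · exact hcosθ
    · rw [Real.cos_two_pi_sub, hcosθ]
  have key : Λ * (2*a₀*p - a₀^2) = 3*a₁^2*a₀^2*p := by
    linear_combination (-(a₀*p)) * hea + a₀^2 * hpe
  have hq2c : q^2 * Λ = 3*p^3 := by
    rw [hq2]
    field_simp
  have keyq : (2*a₀*p - a₀^2)*(3*p^3) = 3*a₁^2*a₀^2*p*q^2 := by
    linear_combination q^2*key - (2*a₀*p - a₀^2)*hq2c
  have hsq' : 1 - x^2 = (a₁*q*a₀/p^2)^2 := by
    rw [hxdef]
    field_simp
    have keyq' : (2*a₀*p - a₀^2)*p^2 = a₁^2*a₀^2*q^2 :=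
      mul_left_cancel₀ (show (3*p:ℝ) ≠ 0 by positivity) (by linear_combination keyq)
    linear_combination keyq'
  have hsin0 : Real.sin η₀ = a₁*q*a₀/p^2 := by
    rw [hη₀def]; split
    · rename_i h
      rw [hsinθ, hsq', Real.sqrt_sq (by positivity)]
    · rename_i h
      push_neg at h
      rw [Real.sin_two_pi_sub, hsinθ]
      have hna : 0 ≤ -a₁ := by linarith
      have h2 : 1 - x^2 = ((-a₁)*q*a₀/p^2)^2 := by rw [hsq']; ring
      rw [h2, Real.sqrt_sq (by positivity)]
      ring
  obtain ⟨v, hvdef⟩ : ∃ v : ℝ, v = 2*π - η₀ := ⟨_, rfl⟩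
  have hv : 0 < v := by rw [hvdef]; linarith
  obtain ⟨L, hLdef⟩ : ∃ L : ℝ, L = q*(2*π) - q*(η₀ - Real.sin η₀) := ⟨_, rfl⟩
  have hφd : ∀ s : ℝ, HasDerivAt (fun s : ℝ => η₀ + s) 1 s :=
    fun s => (hasDerivAt_id s).const_add η₀
  have hposc : ∀ s ∈ Ioo (-η₀) v, 0 < 1 - Real.cos (η₀ + s) := by
    intro s hs
    have h2 := hs.2
    rw [hvdef] at h2
    exact one_sub_cos_pos (by linarith [hs.1]) (by linarith)
  refine collapse_framework Λ a₀ a₁ (-η₀) v L hΛ (neg_neg_iff_pos.2 hη₀pos) hv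
    (fun s => p * (1 - Real.cos (η₀ + s)))
    (fun s => p * Real.sin (η₀ + s))
    (fun s => p * Real.cos (η₀ + s))
    (fun s => q * ((η₀ + s) - Real.sin (η₀ + s)) - q * (η₀ - Real.sin η₀))
    (fun s => q * (1 - Real.cos (η₀ + s)))
    (fun s => q * Real.sin (η₀ + s))
    ?_ ?_ ?_ ?_ ?_ ?_ (by simp) ?_ ?_ ?_ ?_ ?_ ?_
  · intro s _
    have h := ((Real.hasDerivAt_cos (η₀+s)).comp s (hφd s)).const_sub 1
    have h2 := h.const_mul p
    exact h2.congr_deriv (by ring)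
  · intro s _
    have h2 := ((Real.hasDerivAt_sin (η₀+s)).comp s (hφd s)).const_mul p
    exact h2.congr_deriv (by ring)
  · intro s _
    have h := ((hφd s).sub ((Real.hasDerivAt_sin (η₀+s)).comp s (hφd s))).const_mul q
    have h2 := h.sub_const (q * (η₀ - Real.sin η₀))
    exact h2.congr_deriv (by ring)
  · intro s _
    have h := ((Real.hasDerivAt_cos (η₀+s)).comp s (hφd s)).const_sub 1
    have h2 := h.const_mul q
    exact h2.congr_deriv (by ring)
  · intro s hs
    exact mul_pos hq (hposc s hs)
  · intro s hs
    exact mul_pos hp (hposc s ⟨by linarith [hs.1, hη₀pos], hs.2⟩)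
  · show p * (1 - Real.cos (η₀ + 0)) = a₀
    rw [add_zero, hcos0, hxdef]
    field_simp
    ring
  · show p * Real.sin (η₀ + 0) = a₁ * (q * (1 - Real.cos (η₀ + 0)))
    rw [add_zero, hcos0, hsin0, hxdef]
    field_simp
    ring
  · intro s hs
    have hpq : p^3 = Λ/3 * q^2 := by rw [hq2]; field_simp
    have pyth := Real.sin_sq_add_cos_sq (η₀ + s)
    show (p*(1 - Real.cos (η₀ + s)))^2 *
        ((p*Real.cos (η₀ + s)) * (q*(1 - Real.cos (η₀ + s))) -
         (p*Real.sin (η₀ + s)) * (q*Real.sin (η₀ + s))) =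
        (-Λ/3) * (q*(1 - Real.cos (η₀ + s)))^3
    linear_combination (-(p^3*q*(1 - Real.cos (η₀ + s))^2)) * pyth +
      (-(q*(1 - Real.cos (η₀ + s))^3)) * hpq
  · have hBv : q * ((η₀ + v) - Real.sin (η₀ + v)) - q * (η₀ - Real.sin η₀) = L := by
      have h1 : η₀ + v = 2*π := by rw [hvdef]; ring
      rw [h1, Real.sin_two_pi, hLdef]
      ring
    rw [← hBv]
    have hcont : Continuous (fun s => q * ((η₀ + s) - Real.sin (η₀ + s)) - q * (η₀ - Real.sin η₀)) := by
      apply Continuous.sub _ continuous_const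
      apply continuous_const.mul
      exact (continuous_const.add continuous_id).sub
        (Real.continuous_sin.comp (continuous_const.add continuous_id))
    exact (hcont.tendsto v).mono_left nhdsWithin_le_nhds
  · have hAv : p * (1 - Real.cos (η₀ + v)) = 0 := by
      have h1 : η₀ + v = 2*π := by rw [hvdef]; ring
      rw [h1, Real.cos_two_pi]
      ring
    rw [← hAv]
    have hcont : Continuous (fun s => p * (1 - Real.cos (η₀ + s))) :=
      continuous_const.mul (continuous_const.sub
        (Real.continuous_cos.comp (continuous_const.add continuous_id)))
    exact (hcont.tendsto v).mono_left nhdsWithin_le_nhds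
  · have hgpos : ∀ᶠ r in nhdsWithin (0:ℝ) (Ioi 0), 0 < r - Real.sin r := by
      filter_upwards [self_mem_nhdsWithin] with r hr
      rw [mem_Ioi] at hr
      have := Real.sin_lt hr
      linarith
    have h1 := (rate_limit (fun r => 1 - Real.cos r) (fun r => r - Real.sin r) p q hp hq
      tendsto_one_sub_cos tendsto_sub_sin hgpos).comp (tendsto_sub_Iio v)
    rw [rate_const_eq Λ p q hΛ hp hq hq2] at h1
    refine h1.congr' ?_
    filter_upwards [self_mem_nhdsWithin] with s _
    simp only [Function.comp]
    have e1 : η₀ + s = 2*π - (v - s) := by rw [hvdef]; ring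
    have e2 : Real.cos (η₀ + s) = Real.cos (v - s) := by rw [e1, Real.cos_two_pi_sub]
    have e3 : Real.sin (η₀ + s) = -Real.sin (v - s) := by rw [e1, Real.sin_two_pi_sub]
    rw [e2]
    congr 1
    rw [hLdef, e3, hvdef]
    ring

lemma parabolic_case (Λ a₀ a₁ : ℝ) (hΛ : 0 < Λ) (ha₀ : 0 < a₀)
    (ha₁ : a₁ = -Real.sqrt (2 * Λ / (3 * a₀))) :
    ∃ T : ℝ, 0 < T ∧
    ∃ a a' a'' : ℝ → ℝ,
      a 0 = a₀ ∧ a' 0 = a₁ ∧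
      ContinuousOn a'' (Ico 0 T) ∧
      (∀ t ∈ Ico (0 : ℝ) T,
        0 < a t ∧
        HasDerivWithinAt a (a' t) (Ico 0 T) t ∧
        HasDerivWithinAt a' (a'' t) (Ico 0 T) t ∧
        (a t) ^ 2 * a'' t = -Λ / 3) ∧
      Tendsto a (nhdsWithin T (Iio T)) (nhds 0) ∧
      Tendsto (fun t => a t * (T - t) ^ (-(2 : ℝ) / 3)) (nhdsWithin T (Iio T))
        (nhds ((3 * Λ / 2) ^ ((1 : ℝ) / 3))) := by
  set c : ℝ := Real.sqrt (3 * Λ / 2) with hcdef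
  have hc : 0 < c := Real.sqrt_pos.2 (by linarith)
  have hc2 : c^2 = 3 * Λ / 2 := Real.sq_sqrt (by linarith)
  set K : ℝ := a₀ ^ ((3:ℝ)/2) with hKdef
  have hK : 0 < K := Real.rpow_pos_of_pos ha₀ _
  set v : ℝ := K / c with hvdef
  have hv : 0 < v := div_pos hK hc
  set X : ℝ → ℝ := fun s => K - c * s with hXdef
  have hXpos : ∀ s ∈ Ioo (-v) v, 0 < X s := by
    intro s hs
    have : s < K / c := hs.2
    have h2 := (lt_div_iff₀ hc).1 this
    simp only [hXdef]
    nlinarith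
  have hXd : ∀ s : ℝ, HasDerivAt X (-c) s := by
    intro s
    simpa using ((hasDerivAt_id s).const_mul c).const_sub K
  set A : ℝ → ℝ := fun s => X s ^ ((2:ℝ)/3) with hAdef
  set A' : ℝ → ℝ := fun s => -(2/3) * c * X s ^ (-(1:ℝ)/3) with hA'def
  set A'' : ℝ → ℝ := fun s => -(2/9) * c^2 * X s ^ (-(4:ℝ)/3) with hA''def
  have hAd : ∀ s ∈ Ioo (-v) v, HasDerivAt A (A' s) s := by
    intro s hs
    have h1 := (Real.hasDerivAt_rpow_const (p := (2:ℝ)/3)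
      (Or.inl (ne_of_gt (hXpos s hs)))).comp s (hXd s)
    refine h1.congr_deriv ?_
    simp only [hA'def]
    rw [show (2:ℝ)/3 - 1 = -(1:ℝ)/3 by norm_num]
    ring
  have hA'd : ∀ s ∈ Ioo (-v) v, HasDerivAt A' (A'' s) s := by
    intro s hs
    have h1 := ((Real.hasDerivAt_rpow_const (p := -(1:ℝ)/3)
      (Or.inl (ne_of_gt (hXpos s hs)))).comp s (hXd s)).const_mul (-(2/3) * c)
    refine h1.congr_deriv ?_
    simp only [hA''def]
    rw [show -(1:ℝ)/3 - 1 = -(4:ℝ)/3 by norm_num]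
    ring
  have key0 : X 0 = K := by simp [hXdef]
  have hXv : ∀ s, X s = c * (v - s) := by
    intro s
    simp only [hXdef, hvdef]
    field_simp
  refine collapse_framework Λ a₀ a₁ (-v) v v hΛ (neg_neg_iff_pos.2 hv) hv
    A A' A'' id (fun _ => 1) (fun _ => 0) hAd hA'd
    (fun s _ => hasDerivAt_id s) (fun s _ => hasDerivAt_const s 1)
    (fun s _ => one_pos) ?_ rfl ?_ ?_ ?_ ?_ ?_ ?_
  · -- A positive on [0, v)
    intro s hs
    exact Real.rpow_pos_of_pos (hXpos s ⟨by linarith [hs.1], hs.2⟩) _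
  · -- A 0 = a₀
    simp only [hAdef, key0, hKdef]
    rw [← Real.rpow_mul ha₀.le]
    norm_num
  · -- A' 0 = a₁ * 1
    simp only [hA'def, key0, mul_one, ha₁]
    have hKpow : K ^ (-(1:ℝ)/3) = a₀ ^ (-(1:ℝ)/2) := by
      rw [hKdef, ← Real.rpow_mul ha₀.le]
      norm_num
    rw [hKpow]
    have hsq : ((2:ℝ)/3 * c * a₀ ^ (-(1:ℝ)/2))^2 = 2 * Λ / (3 * a₀) := by
      have ha2 : (a₀ ^ (-(1:ℝ)/2))^2 = a₀⁻¹ := by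
        rw [← Real.rpow_natCast (a₀ ^ (-(1:ℝ)/2)) 2, ← Real.rpow_mul ha₀.le]
        norm_num
        rw [Real.rpow_neg_one]
      calc ((2:ℝ)/3 * c * a₀ ^ (-(1:ℝ)/2))^2 = (2/3)^2 * c^2 * (a₀ ^ (-(1:ℝ)/2))^2 := by ring
        _ = (2/3)^2 * (3 * Λ / 2) * a₀⁻¹ := by rw [hc2, ha2]
        _ = 2 * Λ / (3 * a₀) := by field_simp
    rw [← hsq, Real.sqrt_sq (by positivity)]
    ring
  · -- ODE
    intro s hs
    have hx := hXpos s hs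
    simp only [hA''def, hAdef, mul_one, mul_zero, sub_zero, one_pow]
    have h1 : (X s ^ ((2:ℝ)/3))^2 = X s ^ ((4:ℝ)/3) := by
      rw [← Real.rpow_natCast (X s ^ ((2:ℝ)/3)) 2, ← Real.rpow_mul hx.le]
      norm_num
    rw [h1]
    have h2 : X s ^ ((4:ℝ)/3) * X s ^ (-(4:ℝ)/3) = 1 := by
      rw [← Real.rpow_add hx, ]
      norm_num
    calc X s ^ ((4:ℝ)/3) * (-(2/9) * c^2 * X s ^ (-(4:ℝ)/3))
        = -(2/9) * c^2 * (X s ^ ((4:ℝ)/3) * X s ^ (-(4:ℝ)/3)) := by ring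
      _ = -(2/9) * c^2 := by rw [h2]; ring
      _ = -Λ/3 := by rw [hc2]; ring
  · -- B tendsto
    exact Filter.tendsto_id.mono_left nhdsWithin_le_nhds
  · -- A tendsto 0
    have hcont : ContinuousAt A v := by
      have h1 : ContinuousAt X v :=
        (continuous_const.sub (continuous_const.mul continuous_id)).continuousAt
      have hXv0 : X v = 0 := by rw [hXv v]; ring
      have h2 : ContinuousAt (fun x : ℝ => x ^ ((2:ℝ)/3)) (X v) := by
        rw [hXv0]
        exact Real.continuousAt_rpow_const 0 _ (Or.inr (by norm_num))
      exact h2.comp h1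
    have : A v = 0 := by
      simp only [hAdef]
      rw [hXv v, sub_self, mul_zero, Real.zero_rpow (by norm_num)]
    rw [← this]
    exact hcont.continuousWithinAt.tendsto
  · -- rate
    have hconst : c ^ ((2:ℝ)/3) = (3 * Λ / 2) ^ ((1:ℝ)/3) := by
      rw [hcdef, Real.sqrt_eq_rpow, ← Real.rpow_mul (by linarith : (0:ℝ) ≤ 3 * Λ / 2)]
      norm_num
    rw [← hconst]
    refine tendsto_const_nhds.congr' ?_
    filter_upwards [Ioo_mem_nhdsLT_of_mem (⟨hv, le_refl v⟩ : v ∈ Ioc (0:ℝ) v)] with s hs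
    have hvs : 0 < v - s := by linarith [hs.2]
    simp only [hAdef, id]
    rw [hXv s, Real.mul_rpow hc.le hvs.le, mul_assoc, ← Real.rpow_add hvs]
    norm_num

lemma hyperbolic_case (Λ a₀ a₁ : ℝ) (hΛ : 0 < Λ) (ha₀ : 0 < a₀)
    (ha₁ : a₁ < -Real.sqrt (2 * Λ / (3 * a₀))) :
    ∃ T : ℝ, 0 < T ∧
    ∃ a a' a'' : ℝ → ℝ,
      a 0 = a₀ ∧ a' 0 = a₁ ∧
      ContinuousOn a'' (Ico 0 T) ∧
      (∀ t ∈ Ico (0 : ℝ) T,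
        0 < a t ∧
        HasDerivWithinAt a (a' t) (Ico 0 T) t ∧
        HasDerivWithinAt a' (a'' t) (Ico 0 T) t ∧
        (a t) ^ 2 * a'' t = -Λ / 3) ∧
      Tendsto a (nhdsWithin T (Iio T)) (nhds 0) ∧
      Tendsto (fun t => a t * (T - t) ^ (-(2 : ℝ) / 3)) (nhdsWithin T (Iio T))
        (nhds ((3 * Λ / 2) ^ ((1 : ℝ) / 3))) := by
  have h0 : (0:ℝ) < 2 * Λ / (3 * a₀) := by positivity
  have hneg : a₁ < 0 := lt_of_lt_of_le ha₁ (by simpa using Real.sqrt_nonneg (2 * Λ / (3 * a₀)))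
  have hsq : 2 * Λ / (3 * a₀) < a₁^2 := by
    nlinarith [Real.sq_sqrt h0.le, Real.sqrt_nonneg (2 * Λ / (3 * a₀)),
      sq_nonneg (a₁ + Real.sqrt (2 * Λ / (3 * a₀)))]
  have h3a : (0:ℝ) < 3 * a₀ := by positivity
  have he' : 2*Λ < a₁^2 * (3*a₀) := by
    have h := mul_lt_mul_of_pos_right hsq h3a
    rwa [div_mul_cancel₀ _ (ne_of_gt h3a)] at h
  obtain ⟨e, hedef⟩ : ∃ e : ℝ, e = a₁^2/2 - Λ/(3*a₀) := ⟨_, rfl⟩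
  have he : 0 < e := by
    rw [hedef, sub_pos, div_lt_div_iff₀ h3a two_pos]
    linarith
  obtain ⟨p, hpdef⟩ : ∃ p : ℝ, p = Λ/(6*e) := ⟨_, rfl⟩
  have hp : 0 < p := by rw [hpdef]; positivity
  have hp0 : p ≠ 0 := ne_of_gt hp
  have hpe : 6*p*e = Λ := by rw [hpdef]; field_simp
  have hea : 6*a₀*e = 3*a₀*a₁^2 - 2*Λ := by rw [hedef]; field_simp; ring
  have h3p : (0:ℝ) < 3*p^3/Λ := div_pos (by positivity) hΛ
  obtain ⟨q, hqdef⟩ : ∃ q : ℝ, q = Real.sqrt (3*p^3/Λ) := ⟨_, rfl⟩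
  have hq : 0 < q := by rw [hqdef]; exact Real.sqrt_pos.2 h3p
  have hq2 : q^2 = 3*p^3/Λ := by rw [hqdef]; exact Real.sq_sqrt h3p.le
  have hq2c : q^2 * Λ = 3*p^3 := by rw [hq2]; field_simp
  obtain ⟨x, hxdef⟩ : ∃ x : ℝ, x = 1 + a₀/p := ⟨_, rfl⟩
  have hx1 : 1 < x := by
    rw [hxdef]
    have : 0 < a₀/p := by positivity
    linarith
  have hx2 : (0:ℝ) ≤ x^2 - 1 := by nlinarith
  obtain ⟨y, hydef⟩ : ∃ y : ℝ, y = x + Real.sqrt (x^2 - 1) := ⟨_, rfl⟩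
  have hy1 : 1 < y := by
    rw [hydef]
    have := Real.sqrt_nonneg (x^2 - 1)
    linarith
  have hy0 : 0 < y := by linarith
  have hymul : y * (x - Real.sqrt (x^2 - 1)) = 1 := by
    rw [hydef]
    have h := Real.sq_sqrt hx2
    nlinarith [h]
  have hyinv : y⁻¹ = x - Real.sqrt (x^2 - 1) := inv_eq_of_mul_eq_one_right hymul
  obtain ⟨η₀, hη₀def⟩ : ∃ η₀ : ℝ, η₀ = Real.log y := ⟨_, rfl⟩
  have hη₀pos : 0 < η₀ := by rw [hη₀def]; exact Real.log_pos hy1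
  have hcosh0 : Real.cosh η₀ = x := by
    rw [hη₀def, Real.cosh_log hy0, hyinv, hydef]
    ring
  have hsinh : Real.sinh η₀ = Real.sqrt (x^2 - 1) := by
    rw [hη₀def, Real.sinh_log hy0, hyinv, hydef]
    ring
  have keyH : Λ * (2*a₀*p + a₀^2) = 3*a₁^2*a₀^2*p := by
    linear_combination (a₀*p) * hea - a₀^2 * hpe
  have keyqH : (2*a₀*p + a₀^2)*(3*p^3) = 3*a₁^2*a₀^2*p*q^2 := by
    linear_combination q^2*keyH - (2*a₀*p + a₀^2)*hq2c
  have hna : (0:ℝ) ≤ -a₁ := by linarith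
  have hsqH : x^2 - 1 = ((-a₁)*q*a₀/p^2)^2 := by
    rw [hxdef]
    field_simp
    have keyqH' : (2*a₀*p + a₀^2)*p^2 = a₁^2*a₀^2*q^2 :=
      mul_left_cancel₀ (show (3*p:ℝ) ≠ 0 by positivity) (by linear_combination keyqH)
    linear_combination keyqH'
  have hsinh0 : Real.sinh η₀ = (-a₁)*q*a₀/p^2 := by
    rw [hsinh, hsqH, Real.sqrt_sq (by positivity)]
  obtain ⟨L, hLdef⟩ : ∃ L : ℝ, L = q*(Real.sinh η₀ - η₀) := ⟨_, rfl⟩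
  have hrd : ∀ s : ℝ, HasDerivAt (fun s : ℝ => η₀ - s) (-1) s :=
    fun s => (hasDerivAt_id s).const_sub η₀
  have hposc : ∀ s ∈ Ioo (-1 : ℝ) η₀, 0 < Real.cosh (η₀ - s) - 1 := by
    intro s hs
    have : η₀ - s ≠ 0 := ne_of_gt (by linarith [hs.2])
    have := Real.one_lt_cosh.2 this
    linarith
  refine collapse_framework Λ a₀ a₁ (-1) η₀ L hΛ (by norm_num) hη₀pos
    (fun s => p * (Real.cosh (η₀ - s) - 1))
    (fun s => -p * Real.sinh (η₀ - s))
    (fun s => p * Real.cosh (η₀ - s))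
    (fun s => q * ((Real.sinh η₀ - η₀) - (Real.sinh (η₀ - s) - (η₀ - s))))
    (fun s => q * (Real.cosh (η₀ - s) - 1))
    (fun s => -q * Real.sinh (η₀ - s))
    ?_ ?_ ?_ ?_ ?_ ?_ (by simp) ?_ ?_ ?_ ?_ ?_ ?_
  · intro s _
    have h := (((Real.hasDerivAt_cosh (η₀ - s)).comp s (hrd s)).sub_const 1).const_mul p
    exact h.congr_deriv (by ring)
  · intro s _
    have h := ((Real.hasDerivAt_sinh (η₀ - s)).comp s (hrd s)).const_mul (-p)
    exact h.congr_deriv (by ring)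
  · intro s _
    have inner := ((Real.hasDerivAt_sinh (η₀ - s)).comp s (hrd s)).sub (hrd s)
    have h := (inner.const_sub (Real.sinh η₀ - η₀)).const_mul q
    exact h.congr_deriv (by ring)
  · intro s _
    have h := (((Real.hasDerivAt_cosh (η₀ - s)).comp s (hrd s)).sub_const 1).const_mul q
    exact h.congr_deriv (by ring)
  · intro s hs
    exact mul_pos hq (hposc s hs)
  · intro s hs
    exact mul_pos hp (hposc s ⟨by linarith [hs.1, hη₀pos], hs.2⟩)
  · show p * (Real.cosh (η₀ - 0) - 1) = a₀
    rw [sub_zero, hcosh0, hxdef]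
    field_simp
    ring
  · show -p * Real.sinh (η₀ - 0) = a₁ * (q * (Real.cosh (η₀ - 0) - 1))
    rw [sub_zero, hcosh0, hsinh0, hxdef]
    field_simp
    ring
  · intro s hs
    have hpq : p^3 = Λ/3 * q^2 := by rw [hq2]; field_simp
    have pyth := Real.cosh_sq_sub_sinh_sq (η₀ - s)
    show (p*(Real.cosh (η₀ - s) - 1))^2 *
        ((p*Real.cosh (η₀ - s)) * (q*(Real.cosh (η₀ - s) - 1)) -
         (-p*Real.sinh (η₀ - s)) * (-q*Real.sinh (η₀ - s))) =
        (-Λ/3) * (q*(Real.cosh (η₀ - s) - 1))^3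
    linear_combination (p^3*q*(Real.cosh (η₀ - s) - 1)^2) * pyth +
      (-(q*(Real.cosh (η₀ - s) - 1)^3)) * hpq
  · have hBv : q * ((Real.sinh η₀ - η₀) - (Real.sinh (η₀ - η₀) - (η₀ - η₀))) = L := by
      rw [sub_self, Real.sinh_zero, hLdef]
      ring
    rw [← hBv]
    have hcont : Continuous (fun s => q * ((Real.sinh η₀ - η₀) -
        (Real.sinh (η₀ - s) - (η₀ - s)))) := by
      apply continuous_const.mul
      apply continuous_const.sub
      exact (Real.continuous_sinh.comp (continuous_const.sub continuous_id)).sub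
        (continuous_const.sub continuous_id)
    exact (hcont.tendsto η₀).mono_left nhdsWithin_le_nhds
  · have hAv : p * (Real.cosh (η₀ - η₀) - 1) = 0 := by
      rw [sub_self, Real.cosh_zero]
      ring
    rw [← hAv]
    have hcont : Continuous (fun s => p * (Real.cosh (η₀ - s) - 1)) :=
      continuous_const.mul ((Real.continuous_cosh.comp
        (continuous_const.sub continuous_id)).sub continuous_const)
    exact (hcont.tendsto η₀).mono_left nhdsWithin_le_nhds
  · have hgpos : ∀ᶠ r in nhdsWithin (0:ℝ) (Ioi 0), 0 < Real.sinh r - r := by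
      filter_upwards [self_mem_nhdsWithin] with r hr
      rw [mem_Ioi] at hr
      have := Real.self_lt_sinh_iff.2 hr
      linarith
    have h1 := (rate_limit (fun r => Real.cosh r - 1) (fun r => Real.sinh r - r) p q hp hq
      tendsto_cosh_sub_one tendsto_sinh_sub hgpos).comp (tendsto_sub_Iio η₀)
    rw [rate_const_eq Λ p q hΛ hp hq hq2] at h1
    refine h1.congr' ?_
    filter_upwards [self_mem_nhdsWithin] with s _
    simp only [Function.comp]
    congr 1
    rw [hLdef]
    ring

/-- Proposition (subcritical case of the separable collapse ODE `a²a'' = −Λ/3`):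
for `Λ > 0`, `a₀ > 0` and `a₁ < √(2Λ/(3a₀))`, there exist `T ∈ (0,∞)` and a positive
twice continuously differentiable solution on `[0,T)` with the given initial data,
which collapses to zero at `t = T` at the universal rate
`a(t)·(T − t)^{−2/3} → (3Λ/2)^{1/3}`. -/
theorem subcritical_collapse
    (Λ a₀ a₁ : ℝ) (hΛ : 0 < Λ) (ha₀ : 0 < a₀)
    (ha₁ : a₁ < Real.sqrt (2 * Λ / (3 * a₀))) :
    ∃ T : ℝ, 0 < T ∧
    ∃ a a' a'' : ℝ → ℝ,
      a 0 = a₀ ∧ a' 0 = a₁ ∧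
      ContinuousOn a'' (Ico 0 T) ∧
      (∀ t ∈ Ico (0 : ℝ) T,
        0 < a t ∧
        HasDerivWithinAt a (a' t) (Ico 0 T) t ∧
        HasDerivWithinAt a' (a'' t) (Ico 0 T) t ∧
        (a t) ^ 2 * a'' t = -Λ / 3) ∧
      Tendsto a (nhdsWithin T (Iio T)) (nhds 0) ∧
      Tendsto (fun t => a t * (T - t) ^ (-(2 : ℝ) / 3)) (nhdsWithin T (Iio T))
        (nhds ((3 * Λ / 2) ^ ((1 : ℝ) / 3))) := by
  rcases lt_trichotomy a₁ (-Real.sqrt (2 * Λ / (3 * a₀))) with h | h | h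
  · exact hyperbolic_case Λ a₀ a₁ hΛ ha₀ h
  · exact parabolic_case Λ a₀ a₁ hΛ ha₀ h
  · exact elliptic_case Λ a₀ a₁ hΛ ha₀ ha₁ h
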